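/- arXiv:2304.02331 — 4 statements merged into one kernel-verified Lean document; each statement's English description precedes it below -/
import Mathlib

section
/- Let Cl(n,1) be the Clifford algebra of Minkowski space ℝ^{n,1}, W a Cl(n,1)-module equipped with a positive definite inner product such that Clifford multiplication by spacelike unit vectors is skew-adjoint and by the timelike unit vector e₀ is self-adjoint. For φ ∈ W define the Dirac current V_φ ∈ ℝ^{n,1} by ⟨V_φ, X⟩_{Mink} = −⟨e₀·X·φ, φ⟩ for all X. Then |V_φ · φ|² = −⟨V_φ, V_φ⟩_{Mink} · |φ|². -/
open scoped RealInnerProductSpace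

/-- The Minkowski bilinear form of signature (n,1) on ℝ^{n,1} = ℝⁿ ⊕ ℝe₀. -/
noncomputable def mink {n : ℕ} (v w : EuclideanSpace ℝ (Fin n) × ℝ) : ℝ :=
  ⟪v.1, w.1⟫ - v.2 * w.2

/-- The future unit timelike vector e₀. -/
noncomputable def e0 (n : ℕ) : EuclideanSpace ℝ (Fin n) × ℝ := (0, 1)

/-- for the Dirac current V_φ of a spinor φ in a Cl(n,1)-module with
compatible positive definite inner product, |V_φ · φ|² = −⟨V_φ,V_φ⟩·|φ|². -/
theorem dirac_current_clifford_norm (n : ℕ) (W : Type*) [NormedAddCommGroup W]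
    [InnerProductSpace ℝ W]
    (cm : (EuclideanSpace ℝ (Fin n) × ℝ) →ₗ[ℝ] Module.End ℝ W)
    -- Clifford relation v·v·φ = −⟨v,v⟩φ
    (hcl : ∀ v (ψ : W), cm v (cm v ψ) = -(mink v v) • ψ)
    -- e₀· is self-adjoint
    (he0 : ∀ ψ χ : W, ⟪cm (e0 n) ψ, χ⟫ = ⟪ψ, cm (e0 n) χ⟫)
    -- Clifford multiplication by spacelike vectors is skew-adjoint
    (hsp : ∀ (x : EuclideanSpace ℝ (Fin n)) (ψ χ : W),
      ⟪cm (x, (0:ℝ)) ψ, χ⟫ = -⟪ψ, cm (x, (0:ℝ)) χ⟫)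
    (φ : W) (Vφ : EuclideanSpace ℝ (Fin n) × ℝ)
    -- defining property of the Dirac current
    (hV : ∀ X, mink Vφ X = -⟪cm (e0 n) (cm X φ), φ⟫) :
    ‖cm Vφ φ‖ ^ 2 = -(mink Vφ Vφ) * ‖φ‖ ^ 2 := by
  set x := Vφ.1 with hx
  set t := Vφ.2 with htdef
  -- e₀·e₀ = 1
  have hee : ∀ ψ : W, cm (e0 n) (cm (e0 n) ψ) = ψ := by
    intro ψ
    have : mink (e0 n) (e0 n) = -1 := by simp [mink, e0]
    rw [hcl, this]; simp
  -- decomposition of Vφ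
  have hVeq : Vφ = (x, (0:ℝ)) + t • e0 n := by
    apply Prod.ext <;> simp [e0, hx, htdef]
  have hcmV : cm Vφ φ = cm (x, (0:ℝ)) φ + t • cm (e0 n) φ := by
    rw [hVeq]; simp
  -- t = ‖φ‖²
  have ht : t = ‖φ‖ ^ 2 := by
    have h1 := hV (e0 n)
    have h2 : mink Vφ (e0 n) = -t := by simp [mink, e0, htdef]
    rw [h2, hee, real_inner_self_eq_norm_sq] at h1
    linarith
  -- cross term
  have hcross : ⟪cm (e0 n) (cm (x, (0:ℝ)) φ), φ⟫ = -⟪x, x⟫ := by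
    have h1 := hV Vφ
    have h2 : mink Vφ Vφ = ⟪x, x⟫ - t * t := rfl
    rw [h2, hcmV] at h1
    simp only [map_add, map_smul, hee, inner_add_left, inner_smul_left,
      RCLike.conj_to_real, real_inner_self_eq_norm_sq] at h1
    rw [ht] at h1
    linarith [h1, real_inner_self_eq_norm_sq x]
  set a := cm (x, (0:ℝ)) φ with ha
  set b := cm (e0 n) φ with hb
  have haa : ⟪a, a⟫ = ⟪x, x⟫ * ‖φ‖ ^ 2 := by
    rw [ha, hsp, hcl]
    have : mink (x, (0:ℝ)) (x, (0:ℝ)) = ⟪x, x⟫ := by simp [mink]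
    rw [this]
    rw [real_inner_smul_right, real_inner_self_eq_norm_sq, real_inner_self_eq_norm_sq]
    ring
  have hbb : ⟪b, b⟫ = ‖φ‖ ^ 2 := by
    rw [hb, he0, hee, real_inner_self_eq_norm_sq]
  have hab : ⟪a, b⟫ = -⟪x, x⟫ := by
    rw [real_inner_comm, hb, he0, real_inner_comm]
    exact hcross
  have hnorm : ‖cm Vφ φ‖ ^ 2 = ⟪cm Vφ φ, cm Vφ φ⟫ := (real_inner_self_eq_norm_sq _).symm
  rw [hnorm, hcmV]
  have h2 : mink Vφ Vφ = ⟪x, x⟫ - t * t := rfl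
  simp only [inner_add_left, inner_add_right, inner_smul_left, inner_smul_right,
    RCLike.conj_to_real, haa, hbb, hab, real_inner_comm b a, h2]
  rw [real_inner_comm b a] at hab
  rw [hab]
  rw [ht]; ring
end

section
/- In the setting of the Dirac current on a Clifford module W over Cl(n,1): writing V_φ = u_φ e₀ − U_φ with U_φ ∈ ℝⁿ, one has u_φ = |φ|² for every φ ∈ W. In particular V_φ = 0 if and only if φ = 0, and if φ ≠ 0 then V_φ is future-causal (⟨V_φ,V_φ⟩_{Mink} ≤ 0 and u_φ > 0). -/
open scoped RealInnerProductSpace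

/-- writing V_φ = u_φ e₀ − U_φ (so that u_φ = (V_φ).2), one has
u_φ = |φ|²; moreover V_φ = 0 iff φ = 0, and for φ ≠ 0 the Dirac current is
future-causal: ⟨V_φ,V_φ⟩ ≤ 0 and u_φ > 0. -/
theorem dirac_current_time_component (n : ℕ) (W : Type*) [NormedAddCommGroup W]
    [InnerProductSpace ℝ W]
    (cm : (EuclideanSpace ℝ (Fin n) × ℝ) →ₗ[ℝ] Module.End ℝ W)
    (hcl : ∀ v (ψ : W), cm v (cm v ψ) = -(mink v v) • ψ)
    (he0 : ∀ ψ χ : W, ⟪cm (e0 n) ψ, χ⟫ = ⟪ψ, cm (e0 n) χ⟫)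
    (hsp : ∀ (x : EuclideanSpace ℝ (Fin n)) (ψ χ : W),
      ⟪cm (x, (0:ℝ)) ψ, χ⟫ = -⟪ψ, cm (x, (0:ℝ)) χ⟫)
    (φ : W) (Vφ : EuclideanSpace ℝ (Fin n) × ℝ)
    (hV : ∀ X, mink Vφ X = -⟪cm (e0 n) (cm X φ), φ⟫) :
    Vφ.2 = ‖φ‖ ^ 2 ∧ (Vφ = 0 ↔ φ = 0) ∧
      (φ ≠ 0 → mink Vφ Vφ ≤ 0 ∧ 0 < Vφ.2) := by

  classical
  have hm0 : mink (e0 n) (e0 n) = -1 := by simp [mink, e0]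
  have he0sq : ∀ ψ : W, cm (e0 n) (cm (e0 n) ψ) = ψ := by
    intro ψ; rw [hcl, hm0]; simp
  -- time component
  have hu : Vφ.2 = ‖φ‖ ^ 2 := by
    have h := hV (e0 n)
    rw [he0sq] at h
    have h2 : mink Vφ (e0 n) = -Vφ.2 := by simp [mink, e0]
    rw [h2, real_inner_self_eq_norm_sq] at h
    linarith
  -- spatial components
  have hU : ∀ x : EuclideanSpace ℝ (Fin n),
      ⟪Vφ.1, x⟫ = -⟪cm (e0 n) (cm (x, (0:ℝ)) φ), φ⟫ := by
    intro x
    have h := hV (x, 0)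
    simpa [mink] using h
  -- squares-to-values helper
  have aux : ∀ a b : ℝ, 0 ≤ a → 0 ≤ b → a ^ 2 = b ^ 2 → a = b := by
    intro a b ha hb h
    nlinarith [sq_nonneg (a - b), sq_nonneg (a + b)]
  -- cm (e0 n) preserves norms
  have he0n : ∀ ψ : W, ‖cm (e0 n) ψ‖ = ‖ψ‖ := by
    intro ψ
    have h : ⟪cm (e0 n) ψ, cm (e0 n) ψ⟫ = ⟪ψ, ψ⟫ := by rw [he0, he0sq]
    rw [real_inner_self_eq_norm_sq, real_inner_self_eq_norm_sq] at h
    exact aux _ _ (norm_nonneg _) (norm_nonneg _) h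
  -- norm of spatial clifford multiplication
  have hspn : ∀ x : EuclideanSpace ℝ (Fin n),
      ‖cm (x, (0:ℝ)) φ‖ = ‖x‖ * ‖φ‖ := by
    intro x
    have hmx : mink (x, (0:ℝ)) (x, (0:ℝ)) = ‖x‖ ^ 2 := by
      simp only [mink, mul_zero, sub_zero]
      exact real_inner_self_eq_norm_sq x
    have h : ⟪cm (x, (0:ℝ)) φ, cm (x, (0:ℝ)) φ⟫ = ‖x‖ ^ 2 * ‖φ‖ ^ 2 := by
      rw [hsp, hcl, hmx]
      rw [inner_smul_right, real_inner_self_eq_norm_sq]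
      ring
    rw [real_inner_self_eq_norm_sq] at h
    refine aux _ _ (norm_nonneg _) (mul_nonneg (norm_nonneg _) (norm_nonneg _)) ?_
    rw [h]; ring
  -- key bound on the spatial part
  have key : ‖Vφ.1‖ ^ 2 ≤ ‖Vφ.1‖ * ‖φ‖ ^ 2 := by
    have h1 : ‖Vφ.1‖ ^ 2 = -⟪cm (e0 n) (cm (Vφ.1, (0:ℝ)) φ), φ⟫ := by
      rw [← real_inner_self_eq_norm_sq]; exact hU Vφ.1
    have h2 : |⟪cm (e0 n) (cm (Vφ.1, (0:ℝ)) φ), φ⟫| ≤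
        ‖cm (e0 n) (cm (Vφ.1, (0:ℝ)) φ)‖ * ‖φ‖ := abs_real_inner_le_norm _ _
    rw [he0n, hspn] at h2
    have h3 := neg_abs_le (⟪cm (e0 n) (cm (Vφ.1, (0:ℝ)) φ), φ⟫)
    nlinarith
  refine ⟨hu, ?_, ?_⟩
  · constructor
    · intro h
      have h2 : Vφ.2 = 0 := by rw [h]; rfl
      rw [hu] at h2
      have : ‖φ‖ = 0 := by nlinarith [norm_nonneg φ]
      exact norm_eq_zero.mp this
    · intro h
      subst h
      have h1 : Vφ.1 = 0 := by
        have := hU Vφ.1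
        simp at this
        exact this
      have h2 : Vφ.2 = 0 := by rw [hu]; simp
      exact Prod.ext h1 h2
  · intro hφ
    have hpos : 0 < ‖φ‖ ^ 2 := pow_pos (norm_pos_iff.mpr hφ) 2
    constructor
    · have : mink Vφ Vφ = ‖Vφ.1‖ ^ 2 - Vφ.2 * Vφ.2 := by
        rw [mink, real_inner_self_eq_norm_sq]
      rw [this, hu]
      nlinarith [key, sq_nonneg (‖Vφ.1‖ - ‖φ‖ ^ 2), norm_nonneg Vφ.1]
    · rw [hu]; exact hpos
end

section
/- Let W be a Cl(n,1)-module with a compatible positive definite inner product as above, φ ∈ W nonzero, and V ∈ ℝ^{n,1} with V · φ = 0 (Clifford multiplication). Then V is a scalar multiple of the Dirac current V_φ, and if moreover V ≠ 0 then V_φ is lightlike: ⟨V_φ, V_φ⟩_{Mink} = 0. -/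
open scoped RealInnerProductSpace

lemma mink_symm {n : ℕ} (v w : EuclideanSpace ℝ (Fin n) × ℝ) : mink v w = mink w v := by
  unfold mink; rw [real_inner_comm]; ring

lemma mink_add_left {n : ℕ} (u v w : EuclideanSpace ℝ (Fin n) × ℝ) :
    mink (u + v) w = mink u w + mink v w := by
  unfold mink; simp [inner_add_left]; ring

lemma mink_smul_left {n : ℕ} (c : ℝ) (v w : EuclideanSpace ℝ (Fin n) × ℝ) :
    mink (c • v) w = c * mink v w := by
  unfold mink; simp [inner_smul_left]; ring

/-- if φ ≠ 0 and V · φ = 0 then V is a scalar multiple of the Dirac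
current V_φ; if moreover V ≠ 0, then V_φ is lightlike. -/
theorem annihilating_vector_multiple_of_dirac_current (n : ℕ) (W : Type*)
    [NormedAddCommGroup W] [InnerProductSpace ℝ W]
    (cm : (EuclideanSpace ℝ (Fin n) × ℝ) →ₗ[ℝ] Module.End ℝ W)
    (hcl : ∀ v (ψ : W), cm v (cm v ψ) = -(mink v v) • ψ)
    (he0 : ∀ ψ χ : W, ⟪cm (e0 n) ψ, χ⟫ = ⟪ψ, cm (e0 n) χ⟫)
    (hsp : ∀ (x : EuclideanSpace ℝ (Fin n)) (ψ χ : W),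
      ⟪cm (x, (0:ℝ)) ψ, χ⟫ = -⟪ψ, cm (x, (0:ℝ)) χ⟫)
    (φ : W) (hφ : φ ≠ 0) (Vφ : EuclideanSpace ℝ (Fin n) × ℝ)
    (hV : ∀ X, mink Vφ X = -⟪cm (e0 n) (cm X φ), φ⟫)
    (V : EuclideanSpace ℝ (Fin n) × ℝ) (hVφ0 : cm V φ = 0) :
    (∃ c : ℝ, V = c • Vφ) ∧ (V ≠ 0 → mink Vφ Vφ = 0) := by
  -- polarized Clifford relation
  have hpol : ∀ v w (ψ : W), cm v (cm w ψ) + cm w (cm v ψ) = (-(2 * mink v w)) • ψ := by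
    intro v w ψ
    have h1 := hcl (v + w) ψ
    have hm2 : mink (v + w) (v + w) = mink v v + 2 * mink v w + mink w w := by
      simp only [mink, Prod.fst_add, Prod.snd_add, inner_add_left, inner_add_right]
      rw [real_inner_comm w.1 v.1]
      ring
    simp only [map_add, LinearMap.add_apply] at h1
    rw [hcl v ψ, hcl w ψ, hm2] at h1
    have h2 : cm v (cm w ψ) + cm w (cm v ψ)
        = (-(mink v v + 2 * mink v w + mink w w)) • ψ
          - (-(mink v v)) • ψ - (-(mink w w)) • ψ := by
      rw [← h1]; abel
    rw [h2]; module
  have hm0 : (0:ℝ) < ⟪φ, φ⟫ := by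
    rw [real_inner_self_eq_norm_sq]
    exact pow_pos (norm_pos_iff.mpr hφ) 2
  have hne : ⟪φ, φ⟫ ≠ 0 := ne_of_gt hm0
  have he00 : mink (e0 n) (e0 n) = (-1 : ℝ) := by simp [mink, e0]
  -- the time component of the Dirac current equals ⟪φ,φ⟫
  have hA : Vφ.2 = ⟪φ, φ⟫ := by
    have h := hV (e0 n)
    rw [hcl, he00] at h
    simp only [neg_neg, one_smul] at h
    simp only [mink, e0, inner_zero_right] at h
    linarith
  -- decomposition of V and consequence of cm V φ = 0
  have hdecV : V.2 • cm (e0 n) φ = -(cm (V.1, (0:ℝ)) φ) := by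
    have hVd : V = (V.1, (0:ℝ)) + V.2 • e0 n := by
      simp [e0, Prod.ext_iff]
    have h := hVφ0
    rw [hVd, map_add, map_smul, LinearMap.add_apply, LinearMap.smul_apply] at h
    exact eq_neg_of_add_eq_zero_right h
  -- key identity: V.2 * ⟪Vφ.1, y⟫ = ⟪φ,φ⟫ * ⟪V.1, y⟫ for all y
  have hC : ∀ y : EuclideanSpace ℝ (Fin n),
      V.2 * ⟪Vφ.1, y⟫ = ⟪φ, φ⟫ * ⟪V.1, y⟫ := by
    intro y
    have hanti : cm (e0 n) (cm ((y, (0:ℝ)) : EuclideanSpace ℝ (Fin n) × ℝ) φ)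
        = -(cm ((y, (0:ℝ)) : EuclideanSpace ℝ (Fin n) × ℝ) (cm (e0 n) φ)) := by
      have h := hpol (e0 n) ((y, (0:ℝ)) : EuclideanSpace ℝ (Fin n) × ℝ) φ
      have hz : mink (e0 n) ((y, (0:ℝ)) : EuclideanSpace ℝ (Fin n) × ℝ) = 0 := by
        simp [mink, e0]
      rw [hz] at h
      simp only [mul_zero, neg_zero, zero_smul] at h
      exact eq_neg_of_add_eq_zero_left h
    have hYX : ⟪cm ((y,(0:ℝ)) : EuclideanSpace ℝ (Fin n) × ℝ)
          (cm ((V.1,(0:ℝ)) : EuclideanSpace ℝ (Fin n) × ℝ) φ), φ⟫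
        = -(⟪V.1, y⟫ * ⟪φ, φ⟫) := by
      have p := hpol ((V.1,(0:ℝ)) : EuclideanSpace ℝ (Fin n) × ℝ)
        ((y,(0:ℝ)) : EuclideanSpace ℝ (Fin n) × ℝ) φ
      have hmXY : mink ((V.1,(0:ℝ)) : EuclideanSpace ℝ (Fin n) × ℝ)
          ((y,(0:ℝ)) : EuclideanSpace ℝ (Fin n) × ℝ) = ⟪V.1, y⟫ := by
        simp [mink]
      rw [hmXY] at p
      have pin := congrArg (fun z => ⟪z, φ⟫) p
      simp only [inner_add_left, real_inner_smul_left] at pin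
      have e1 : ⟪cm ((V.1,(0:ℝ)) : EuclideanSpace ℝ (Fin n) × ℝ)
            (cm ((y,(0:ℝ)) : EuclideanSpace ℝ (Fin n) × ℝ) φ), φ⟫
          = ⟪cm ((y,(0:ℝ)) : EuclideanSpace ℝ (Fin n) × ℝ)
            (cm ((V.1,(0:ℝ)) : EuclideanSpace ℝ (Fin n) × ℝ) φ), φ⟫ := by
        rw [hsp V.1 _ φ, hsp y _ φ, real_inner_comm]
      rw [e1] at pin
      linarith
    have hVy := hV ((y,(0:ℝ)) : EuclideanSpace ℝ (Fin n) × ℝ)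
    have hmVy : mink Vφ ((y,(0:ℝ)) : EuclideanSpace ℝ (Fin n) × ℝ) = ⟪Vφ.1, y⟫ := by
      simp [mink]
    rw [hmVy, hanti] at hVy
    simp only [inner_neg_left, neg_neg] at hVy
    have hkey : V.2 * ⟪Vφ.1, y⟫
        = ⟪cm ((y,(0:ℝ)) : EuclideanSpace ℝ (Fin n) × ℝ) (V.2 • cm (e0 n) φ), φ⟫ := by
      rw [hVy, map_smul, real_inner_smul_left]
    rw [hdecV] at hkey
    simp only [map_neg, inner_neg_left] at hkey
    rw [hYX] at hkey
    linarith
  -- vector identity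
  have hvec : V.2 • Vφ.1 = ⟪φ, φ⟫ • V.1 := by
    apply ext_inner_right ℝ
    intro v
    rw [real_inner_smul_left, real_inner_smul_left]
    exact hC v
  -- V is a multiple of Vφ
  have hc : V = (V.2 / ⟪φ, φ⟫) • Vφ := by
    have h1 : (V.2 / ⟪φ, φ⟫) • Vφ.1 = V.1 := by
      rw [div_eq_mul_inv, mul_comm, mul_smul, hvec, smul_smul, inv_mul_cancel₀ hne, one_smul]
    have h2 : (V.2 / ⟪φ, φ⟫) * Vφ.2 = V.2 := by
      rw [hA]; field_simp
    refine Prod.ext ?_ ?_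
    · exact h1.symm
    · exact h2.symm
  refine ⟨⟨V.2 / ⟪φ, φ⟫, hc⟩, ?_⟩
  intro hVne
  -- mink V V = 0
  have hVV : mink V V = 0 := by
    have h := hcl V φ
    rw [hVφ0, map_zero] at h
    rcases smul_eq_zero.mp h.symm with h1 | h2
    · linarith [neg_eq_zero.mp h1]
    · exact absurd h2 hφ
  -- c ≠ 0
  have hcne : V.2 / ⟪φ, φ⟫ ≠ 0 := by
    intro h0
    apply hVne
    rw [hc, h0, zero_smul]
  have hfac : mink V V = (V.2 / ⟪φ, φ⟫) * ((V.2 / ⟪φ, φ⟫) * mink Vφ Vφ) := by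
    conv_lhs => rw [hc]
    rw [mink_smul_left, mink_symm, mink_smul_left, mink_symm Vφ]
  rw [hVV] at hfac
  rcases mul_eq_zero.mp hfac.symm with h1 | h2
  · exact absurd h1 hcne
  · rcases mul_eq_zero.mp h2 with h3 | h4
    · exact absurd h3 hcne
    · exact h4
end

section
/- In the setting of the previous computation (k = −(h∘s)g with h' ≤ 0 and |ds|_g ≤ 1), the dominant energy condition ρ ≥ |j|_g is implied by the scalar curvature bound scal_g ≥ −n(n−1)(h∘s)² − 2(n−1)(h'∘s). -/
/-- pointwise formulation: for k = −(h∘s)g with h' ≤ 0 and |ds|_g ≤ 1,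
the scalar curvature bound scal ≥ −n(n−1)(h∘s)² − 2(n−1)(h'∘s) implies the dominant
energy condition ρ ≥ |j|_g, where ρ = ½(scal + n(n−1)(h∘s)²) and
|j|_g = (n−1)|h'∘s|·|ds|_g. -/
theorem dec_of_scalar_curvature_bound (n : ℕ) (hn : 2 ≤ n) (M : Type*)
    (scal hs hs' dsnorm : M → ℝ)
    (hh' : ∀ p, hs' p ≤ 0)
    (hds0 : ∀ p, 0 ≤ dsnorm p) (hds1 : ∀ p, dsnorm p ≤ 1)
    (ρ : M → ℝ) (hρ : ∀ p, ρ p = (1/2) * (scal p + (n : ℝ) * ((n : ℝ) - 1) * (hs p) ^ 2))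
    (jnorm : M → ℝ) (hj : ∀ p, jnorm p = ((n : ℝ) - 1) * |hs' p| * dsnorm p)
    (hscal : ∀ p, scal p ≥ -(n : ℝ) * ((n : ℝ) - 1) * (hs p) ^ 2 - 2 * ((n : ℝ) - 1) * hs' p) :
    ∀ p, ρ p ≥ jnorm p := by
  intro p
  have hn1 : (1 : ℝ) ≤ (n : ℝ) := by exact_mod_cast Nat.one_le_of_lt hn
  have habs : |hs' p| = -hs' p := abs_of_nonpos (hh' p)
  have key : jnorm p ≤ ((n : ℝ) - 1) * (-hs' p) := by
    rw [hj, habs]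
    have h1 : (0:ℝ) ≤ ((n : ℝ) - 1) * (-hs' p) := by
      apply mul_nonneg (by linarith) (by linarith [hh' p])
    nlinarith [hds1 p, hds0 p]
  have := hscal p
  rw [hρ]
  nlinarith
end
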